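/- In F_p, the sum Σ_{r=1}^{p-1} (p+t-1)! / (r+t+1)! · (r+1)! equals 0, where t is the integer representing the inverse of 3 mod p (t = (2p+1)/3 if p ≡ 1 mod 3, t = (p+1)/3 if p ≡ 2 mod 3), and the summand is interpreted as (r+1)! times the falling-factorial quotient (p+t-1)!/(r+t+1)! (which is an integer since r+t+1 ≤ p+t-1 for the relevant range, and is taken to be (p+t-1)·(p+t-2)···(r+t+2)). -/

import Mathlib

open Finset

private lemma factorial_ne_zero_zmod {p n : ℕ} (hp : p.Prime) (h : n < p) :
    ((n.factorial : ℕ) : ZMod p) ≠ 0 := by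
  rw [Ne, ZMod.natCast_eq_zero_iff]
  intro hd
  exact absurd (hp.dvd_factorial.mp hd) (by omega)

private lemma prod_Icc_mul_factorial {k m : ℕ} (h : k ≤ m) :
    (∏ j ∈ Icc (k + 1) m, j) * k.factorial = m.factorial := by
  induction m with
  | zero =>
    interval_cases k
    simp
  | succ n ih =>
    rcases eq_or_lt_of_le h with rfl | hlt
    · simp
    · have hk : k ≤ n := by omega
      rw [Finset.prod_Icc_succ_top (by omega), mul_right_comm, ih hk,
        Nat.factorial_succ, mul_comm]

private lemma wilson_aux {p : ℕ} (hp : p.Prime) [Fact p.Prime] {m : ℕ} (h : m < p) :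
    (((p - 1 - m).factorial : ℕ) : ZMod p) * ((m.factorial : ℕ) : ZMod p)
      = (-1 : ZMod p) ^ (m + 1) := by
  have h1 : 1 ≤ p := hp.one_lt.le.trans' (by omega)
  rcases Nat.eq_zero_or_pos m with rfl | hm
  · simpa using ZMod.wilsons_lemma p
  -- (p-1-m)! * ∏_{i ∈ Icc (p-m) (p-1)} i = (p-1)!
  have hnat : (∏ j ∈ Icc (p - 1 - m + 1) (p - 1), j) * (p - 1 - m).factorial
      = (p - 1).factorial := prod_Icc_mul_factorial (by omega)
  have hIcc : p - 1 - m + 1 = p - m := by omega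
  rw [hIcc] at hnat
  -- the product in ZMod p equals (-1)^m * m!
  have hprod : ((∏ j ∈ Icc (p - m) (p - 1), j : ℕ) : ZMod p)
      = (-1 : ZMod p) ^ m * ((m.factorial : ℕ) : ZMod p) := by
    have hmap : Icc (p - m) (p - 1) = Finset.map (addLeftEmbedding (p - m)) (Icc 0 (m - 1)) := by
      rw [Finset.map_add_left_Icc]
      congr 1 <;> omega
    push_cast
    rw [hmap, Finset.prod_map]
    have hterm : ∀ j ∈ Icc 0 (m - 1),
        ((addLeftEmbedding (p - m) j : ℕ) : ZMod p) = -(((m - j : ℕ) : ZMod p)) := by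
      intro j hj
      simp only [Finset.mem_Icc] at hj
      have : (addLeftEmbedding (p - m) j : ℕ) = p - m + j := rfl
      rw [this]
      have e1 : (((p - m + j : ℕ)) : ZMod p) = (p : ZMod p) - m + j := by
        push_cast [Nat.cast_sub (by omega : m ≤ p)]
        ring
      have e2 : (((m - j : ℕ)) : ZMod p) = (m : ZMod p) - j := by
        push_cast [Nat.cast_sub (by omega : j ≤ m)]
        ring
      rw [e1, e2, ZMod.natCast_self]
      ring
    rw [Finset.prod_congr rfl hterm]
    have hneg : ∀ x ∈ Icc 0 (m - 1), -(((m - x : ℕ) : ZMod p)) = (-1 : ZMod p) * ((m - x : ℕ) : ZMod p) := by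
      intro x _; ring
    rw [Finset.prod_congr rfl hneg, Finset.prod_mul_distrib, Finset.prod_const]
    have hcard : (Icc 0 (m - 1)).card = m := by
      rw [Nat.card_Icc]; omega
    rw [hcard]
    congr 1
    have : ∏ j ∈ Icc 0 (m - 1), (((m - j : ℕ)) : ZMod p)
        = ((∏ j ∈ Icc 0 (m - 1), (m - j) : ℕ) : ZMod p) := by
      push_cast
      rfl
    rw [this]
    congr 1
    -- nat identity: ∏_{j=0}^{m-1} (m - j) = m!
    rw [show Icc 0 (m - 1) = Finset.range m by
      rw [← Nat.Ico_zero_eq_range, ← Finset.Ico_add_one_right_eq_Icc]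
      congr 1; omega]
    rw [← Finset.prod_range_add_one_eq_factorial m,
      ← Finset.prod_range_reflect (fun j => j + 1) m]
    apply Finset.prod_congr rfl
    intro j hj
    simp only [Finset.mem_range] at hj
    omega
  -- combine
  have hcast : ((∏ j ∈ Icc (p - m) (p - 1), j : ℕ) : ZMod p)
      * (((p - 1 - m).factorial : ℕ) : ZMod p) = -1 := by
    rw [← Nat.cast_mul, hnat, ZMod.wilsons_lemma]
  rw [hprod] at hcast
  have hm1 : ((-1 : ZMod p) ^ m) * ((-1 : ZMod p) ^ m) = 1 := by
    rw [← pow_add, ← two_mul, pow_mul]; norm_num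
  calc (((p - 1 - m).factorial : ℕ) : ZMod p) * ((m.factorial : ℕ) : ZMod p)
      = ((-1 : ZMod p) ^ m * ((-1 : ZMod p) ^ m))
        * ((((p - 1 - m).factorial : ℕ) : ZMod p) * ((m.factorial : ℕ) : ZMod p)) := by
        rw [hm1, one_mul]
    _ = (-1 : ZMod p) ^ m * ((-1 : ZMod p) ^ m * ((m.factorial : ℕ) : ZMod p)
        * (((p - 1 - m).factorial : ℕ) : ZMod p)) := by ring
    _ = (-1 : ZMod p) ^ m * (-1) := by rw [hcast]
    _ = (-1 : ZMod p) ^ (m + 1) := by rw [pow_succ]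

/-- `∑_{r=1}^{p-1} (p+t-1)!/(r+t+1)! · (r+1)! = 0` in `F_p`, where
`(p+t-1)!/(r+t+1)!` denotes the product of the integers from `r+t+2` to `p+t-1`. -/
theorem stmt5 {p : ℕ} (hp : p.Prime) (hp3 : 3 < p) (t : ℕ)
    (ht : 3 * t = if p % 3 = 1 then 2 * p + 1 else p + 1) :
    ∑ r ∈ Finset.Icc 1 (p - 1),
      (∏ i ∈ Finset.Icc (r + t + 2) (p + t - 1), (i : ZMod p)) * ((r + 1).factorial : ZMod p)
      = 0 := by
  haveI : Fact p.Prime := ⟨hp⟩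
  have h3 : p % 3 ≠ 0 := by
    intro h
    rcases hp.eq_one_or_self_of_dvd 3 (Nat.dvd_of_mod_eq_zero h) with h1 | h1 <;> omega
  have h4 : p ≠ 4 := by rintro rfl; norm_num at hp
  have hpt : 2 ≤ t ∧ t + 2 ≤ p := by
    split_ifs at ht with hmod
    · omega
    · omega
  obtain ⟨ht2, htp⟩ := hpt
  -- restrict sum to Icc (p-t-1) (p-2)
  have hsub : Icc (p - t - 1) (p - 2) ⊆ Icc 1 (p - 1) := by
    intro r hr
    simp only [Finset.mem_Icc] at *
    omega
  have hvan : ∀ r ∈ Icc 1 (p - 1), r ∉ Icc (p - t - 1) (p - 2) →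
      (∏ i ∈ Finset.Icc (r + t + 2) (p + t - 1), (i : ZMod p))
        * ((r + 1).factorial : ZMod p) = 0 := by
    intro r hr hnr
    simp only [Finset.mem_Icc] at hr hnr
    have : r ≤ p - t - 2 ∨ r = p - 1 := by omega
    rcases this with hsmall | rfl
    · have hmem : p ∈ Finset.Icc (r + t + 2) (p + t - 1) := by
        simp only [Finset.mem_Icc]; omega
      rw [Finset.prod_eq_zero hmem (ZMod.natCast_self p), zero_mul]
    · have : p - 1 + 1 = p := by omega
      rw [this]
      have : ((p.factorial : ℕ) : ZMod p) = 0 := by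
        rw [ZMod.natCast_eq_zero_iff]
        exact Nat.dvd_factorial (by omega) le_rfl
      rw [this, mul_zero]
  rw [← Finset.sum_subset hsub hvan]
  -- reindex
  rw [show Icc (p - t - 1) (p - 2)
        = Finset.map (addLeftEmbedding (p - t - 1)) (Finset.Icc 0 (t - 1)) by
      rw [Finset.map_add_left_Icc]; congr 1 <;> omega]
  rw [Finset.sum_map]
  have hterm : ∀ k ∈ Icc 0 (t - 1),
      (∏ i ∈ Finset.Icc ((addLeftEmbedding (p - t - 1) k : ℕ) + t + 2) (p + t - 1),
        (i : ZMod p)) * (((addLeftEmbedding (p - t - 1) k : ℕ) + 1).factorial : ZMod p)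
      = (-1 : ZMod p) ^ (t - k) * (((t - 1).choose k : ℕ) : ZMod p) := by
    intro k hk
    simp only [Finset.mem_Icc] at hk
    have hkt : k ≤ t - 1 := hk.2
    have hemb : (addLeftEmbedding (p - t - 1) k : ℕ) = p - t - 1 + k := rfl
    rw [hemb]
    have e1 : p - t - 1 + k + t + 2 = p + (k + 1) := by omega
    have e2 : p - t - 1 + k + 1 = p - t + k := by omega
    have e3 : p + t - 1 = p + (t - 1) := by omega
    rw [e1, e2, e3]
    -- product over Icc (p+(k+1)) (p+(t-1)) = cast of ∏_{j=k+1}^{t-1} j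
    have hprod : (∏ i ∈ Finset.Icc (p + (k + 1)) (p + (t - 1)), (i : ZMod p))
        = ((∏ j ∈ Icc (k + 1) (t - 1), j : ℕ) : ZMod p) := by
      rw [← Finset.map_add_left_Icc, Finset.prod_map]
      push_cast
      apply Finset.prod_congr rfl
      intro j _
      rw [addLeftEmbedding_apply]
      push_cast [ZMod.natCast_self]
      ring
    rw [hprod]
    -- multiply both sides by k! * (t-1-k)!
    have hu : ((k.factorial : ℕ) : ZMod p) * (((t - 1 - k).factorial : ℕ) : ZMod p) ≠ 0 :=
      mul_ne_zero (factorial_ne_zero_zmod hp (by omega))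
        (factorial_ne_zero_zmod hp (by omega))
    apply mul_right_cancel₀ hu
    have hwil : (((p - t + k).factorial : ℕ) : ZMod p)
        * (((t - 1 - k).factorial : ℕ) : ZMod p) = (-1 : ZMod p) ^ (t - k) := by
      have h5 : p - 1 - (t - 1 - k) = p - t + k := by omega
      have h6 : (t - 1 - k) + 1 = t - k := by omega
      have := wilson_aux hp (p := p) (m := t - 1 - k) (by omega)
      rw [h5, h6] at this
      exact this
    calc ((∏ j ∈ Icc (k + 1) (t - 1), j : ℕ) : ZMod p)
          * (((p - t + k).factorial : ℕ) : ZMod p)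
          * (((k.factorial : ℕ) : ZMod p) * (((t - 1 - k).factorial : ℕ) : ZMod p))
        = (((∏ j ∈ Icc (k + 1) (t - 1), j) * k.factorial : ℕ) : ZMod p)
          * ((((p - t + k).factorial : ℕ) : ZMod p)
            * (((t - 1 - k).factorial : ℕ) : ZMod p)) := by push_cast; ring
      _ = (((t - 1).factorial : ℕ) : ZMod p) * (-1 : ZMod p) ^ (t - k) := by
          rw [prod_Icc_mul_factorial hkt, hwil]
      _ = (-1 : ZMod p) ^ (t - k)
          * ((((t - 1).choose k) * k.factorial * (t - 1 - k).factorial : ℕ) : ZMod p) := by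
          rw [Nat.choose_mul_factorial_mul_factorial hkt]; ring
      _ = (-1 : ZMod p) ^ (t - k) * (((t - 1).choose k : ℕ) : ZMod p)
          * (((k.factorial : ℕ) : ZMod p) * (((t - 1 - k).factorial : ℕ) : ZMod p)) := by
          push_cast; ring
  rw [Finset.sum_congr rfl hterm]
  -- now the alternating sum of binomial coefficients
  have hrange : Icc 0 (t - 1) = Finset.range t := by
    rw [← Nat.Ico_zero_eq_range, ← Finset.Ico_add_one_right_eq_Icc]
    congr 1; omega
  rw [hrange]
  have hsign : ∀ k ∈ Finset.range t,
      (-1 : ZMod p) ^ (t - k) * (((t - 1).choose k : ℕ) : ZMod p)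
      = (-1 : ZMod p) ^ t * ((-1 : ZMod p) ^ k * (((t - 1).choose k : ℕ) : ZMod p)) := by
    intro k hk
    simp only [Finset.mem_range] at hk
    have : (-1 : ZMod p) ^ (t - k) * (-1 : ZMod p) ^ k = (-1 : ZMod p) ^ t := by
      rw [← pow_add]; congr 1; omega
    calc (-1 : ZMod p) ^ (t - k) * (((t - 1).choose k : ℕ) : ZMod p)
        = ((-1 : ZMod p) ^ (t - k) * (-1 : ZMod p) ^ k) * (-1 : ZMod p) ^ k
          * (((t - 1).choose k : ℕ) : ZMod p) := by
          have hsq : (-1 : ZMod p) ^ k * (-1 : ZMod p) ^ k = 1 := by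
            rw [← pow_add, ← two_mul, pow_mul]; norm_num
          calc (-1 : ZMod p) ^ (t - k) * (((t - 1).choose k : ℕ) : ZMod p)
              = (-1 : ZMod p) ^ (t - k) * ((-1 : ZMod p) ^ k * (-1 : ZMod p) ^ k)
                * (((t - 1).choose k : ℕ) : ZMod p) := by rw [hsq]; ring
            _ = _ := by ring
      _ = _ := by rw [this]; ring
  rw [Finset.sum_congr rfl hsign, ← Finset.mul_sum]
  have hz : ∑ k ∈ Finset.range t, (-1 : ZMod p) ^ k * (((t - 1).choose k : ℕ) : ZMod p)
      = 0 := by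
    have halt := Int.alternating_sum_range_choose (n := t - 1)
    rw [if_neg (by omega)] at halt
    have : ((∑ m ∈ Finset.range (t - 1 + 1), (-1 : ℤ) ^ m * ((t - 1).choose m) : ℤ)
        : ZMod p) = 0 := by rw [halt]; simp
    rw [show t - 1 + 1 = t by omega] at this
    push_cast at this
    convert this using 2
  rw [hz, mul_zero]
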